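/- Let V be a finite-dimensional vector space over a field K of characteristic zero, of dimension n ≥ 2, with basis e_1,...,e_n and dual basis λ_1,...,λ_n. The element Σ_{i,j} λ_i^3 λ_j^2 ⊗ λ_i of S^5 V* ⊗ V*, viewed as a linear map from S^4 V to V* ⊗ V*, is surjective. -/

import Mathlib

set_option maxRecDepth 100000
set_option maxHeartbeats 8000000


/-- The element `∑_{i,j} λᵢ³ λⱼ² ⊗ λᵢ` of `S⁵ V* ⊗ V*` (the `S⁵` factor given by its full
symmetrization), contracted with four vectors `v 0, …, v 3 ∈ V` in four of the five
symmetric slots, with `x` in the remaining symmetric slot and `y` in the `V*` factor.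
Here `V = Fin n → K` with standard basis `e i` and dual basis `λ i`. -/
def contract5 {K : Type*} [Field K] (n : ℕ)
    (v : Fin 4 → (Fin n → K)) (x y : Fin n → K) : K :=
  let w : Fin 5 → (Fin n → K) := Fin.snoc v x
  ∑ i : Fin n, ∑ j : Fin n,
    (∑ σ : Equiv.Perm (Fin 5), ∏ k : Fin 5,
      (if (k : ℕ) < 3 then w (σ k) i else w (σ k) j)) * y i


lemma sum_perm_succ {M : Type*} [AddCommMonoid M] {n : ℕ} (f : Equiv.Perm (Fin (n+1)) → M) :
    ∑ σ, f σ = ∑ p : Fin (n+1), ∑ τ : Equiv.Perm (Fin n),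
      f (Equiv.Perm.decomposeFin.symm (p, τ)) := by
  rw [← (Fintype.sum_equiv Equiv.Perm.decomposeFin.symm _ _ (fun _ => rfl) :
    ∑ pe : Fin (n+1) × Equiv.Perm (Fin n), f (Equiv.Perm.decomposeFin.symm pe) = ∑ σ, f σ)]
  exact Fintype.sum_prod_type _

lemma sum_perm_one {M : Type*} [AddCommMonoid M] (f : Equiv.Perm (Fin 1) → M) :
    ∑ σ, f σ = f 1 := by
  rw [Fintype.sum_subsingleton _ 1]

lemma sum_perm_five {M : Type*} [AddCommMonoid M] (f : Equiv.Perm (Fin 5) → M) :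
    ∑ σ, f σ = ∑ p : Fin 5, ∑ q : Fin 4, ∑ r : Fin 3, ∑ s : Fin 2,
      f (Equiv.Perm.decomposeFin.symm (p, Equiv.Perm.decomposeFin.symm (q,
        Equiv.Perm.decomposeFin.symm (r, Equiv.Perm.decomposeFin.symm (s, 1))))) := by
  rw [sum_perm_succ f]
  refine Finset.sum_congr rfl fun p _ => ?_
  rw [sum_perm_succ]
  refine Finset.sum_congr rfl fun q _ => ?_
  rw [sum_perm_succ]
  refine Finset.sum_congr rfl fun r _ => ?_
  rw [sum_perm_succ]
  refine Finset.sum_congr rfl fun s _ => ?_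
  rw [sum_perm_one]

def E {K : Type*} [Field K] {n : ℕ} (a : Fin n) : Fin n → K := fun i => if i = a then 1 else 0

lemma snoc_eq {α : Type*} (u0 u1 u2 u3 x : α) :
    (Fin.snoc ![u0, u1, u2, u3] x : Fin 5 → α) = ![u0, u1, u2, u3, x] := by
  funext k
  fin_cases k <;> simp [Fin.snoc] <;> rfl

lemma contract_rearrange {K : Type*} [Field K] {n : ℕ} (v : Fin 4 → (Fin n → K))
    (x y : Fin n → K) :
    contract5 n v x y = ∑ σ : Equiv.Perm (Fin 5), ∑ i : Fin n, ∑ j : Fin n,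
      (∏ k : Fin 5, (if (k : ℕ) < 3 then (Fin.snoc v x : Fin 5 → (Fin n → K)) (σ k) i
        else (Fin.snoc v x : Fin 5 → (Fin n → K)) (σ k) j)) * y i := by
  rw [contract5]
  have h1 : ∀ i : Fin n, ∀ j : Fin n,
      (∑ σ : Equiv.Perm (Fin 5), ∏ k : Fin 5,
        (if (k : ℕ) < 3 then (Fin.snoc v x : Fin 5 → (Fin n → K)) (σ k) i
          else (Fin.snoc v x : Fin 5 → (Fin n → K)) (σ k) j)) * y i
      = ∑ σ : Equiv.Perm (Fin 5), (∏ k : Fin 5,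
        (if (k : ℕ) < 3 then (Fin.snoc v x : Fin 5 → (Fin n → K)) (σ k) i
          else (Fin.snoc v x : Fin 5 → (Fin n → K)) (σ k) j)) * y i :=
    fun i j => Finset.sum_mul _ _ _
  calc (∑ i : Fin n, ∑ j : Fin n,
      (∑ σ : Equiv.Perm (Fin 5), ∏ k : Fin 5,
        (if (k : ℕ) < 3 then (Fin.snoc v x : Fin 5 → (Fin n → K)) (σ k) i
          else (Fin.snoc v x : Fin 5 → (Fin n → K)) (σ k) j)) * y i)
      = ∑ i : Fin n, ∑ j : Fin n, ∑ σ : Equiv.Perm (Fin 5), (∏ k : Fin 5,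
        (if (k : ℕ) < 3 then (Fin.snoc v x : Fin 5 → (Fin n → K)) (σ k) i
          else (Fin.snoc v x : Fin 5 → (Fin n → K)) (σ k) j)) * y i :=
        Finset.sum_congr rfl fun i _ => Finset.sum_congr rfl fun j _ => h1 i j
    _ = ∑ i : Fin n, ∑ σ : Equiv.Perm (Fin 5), ∑ j : Fin n, (∏ k : Fin 5,
        (if (k : ℕ) < 3 then (Fin.snoc v x : Fin 5 → (Fin n → K)) (σ k) i
          else (Fin.snoc v x : Fin 5 → (Fin n → K)) (σ k) j)) * y i :=
        Finset.sum_congr rfl fun i _ => Finset.sum_comm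
    _ = ∑ σ : Equiv.Perm (Fin 5), ∑ i : Fin n, ∑ j : Fin n, (∏ k : Fin 5,
        (if (k : ℕ) < 3 then (Fin.snoc v x : Fin 5 → (Fin n → K)) (σ k) i
          else (Fin.snoc v x : Fin 5 → (Fin n → K)) (σ k) j)) * y i :=
        Finset.sum_comm

lemma contract_eval {K : Type*} [Field K] {n : ℕ} (a b : Fin n) (hab : a ≠ b)
    (x y : Fin n → K) :
    contract5 n ![E a, E a, E a, E b] x y = 12 * (x b * y a) := by
  rw [contract_rearrange]
  rw [sum_perm_five]
  simp only [Fin.sum_univ_five, Fin.sum_univ_four, Fin.sum_univ_three, Fin.sum_univ_two,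
    Nat.reduceAdd, Fin.prod_univ_five]
  simp only [show (1 : Fin 5) = Fin.succ 0 from rfl, show (2 : Fin 5) = Fin.succ 1 from rfl,
    show (3 : Fin 5) = Fin.succ 2 from rfl, show (4 : Fin 5) = Fin.succ 3 from rfl,
    show (1 : Fin 4) = Fin.succ 0 from rfl, show (2 : Fin 4) = Fin.succ 1 from rfl,
    show (3 : Fin 4) = Fin.succ 2 from rfl,
    show (1 : Fin 3) = Fin.succ 0 from rfl, show (2 : Fin 3) = Fin.succ 1 from rfl,
    show (1 : Fin 2) = Fin.succ 0 from rfl,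
    Equiv.Perm.decomposeFin_symm_apply_zero, Equiv.Perm.decomposeFin_symm_apply_succ,
    Equiv.Perm.one_apply]
  simp (config := { decide := true }) only [Equiv.swap_apply_def]
  simp (config := { decide := true, maxSteps := 10000000 }) only
    [snoc_eq, Matrix.cons_val_zero, Matrix.cons_val_succ, E, mul_ite, ite_mul,
    mul_zero, zero_mul, mul_one, one_mul, Finset.sum_ite_eq, Finset.sum_ite_eq',
    Finset.mem_univ, if_true, hab, Ne.symm hab, if_false, Finset.sum_const_zero, add_zero,
    zero_add]
  ring

lemma contract_eval_diag {K : Type*} [Field K] {n : ℕ} (a : Fin n)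
    (x y : Fin n → K) :
    contract5 n ![E a, E a, E a, E a] x y = 120 * (x a * y a) := by
  rw [contract_rearrange]
  rw [sum_perm_five]
  simp only [Fin.sum_univ_five, Fin.sum_univ_four, Fin.sum_univ_three, Fin.sum_univ_two,
    Nat.reduceAdd, Fin.prod_univ_five]
  simp only [show (1 : Fin 5) = Fin.succ 0 from rfl, show (2 : Fin 5) = Fin.succ 1 from rfl,
    show (3 : Fin 5) = Fin.succ 2 from rfl, show (4 : Fin 5) = Fin.succ 3 from rfl,
    show (1 : Fin 4) = Fin.succ 0 from rfl, show (2 : Fin 4) = Fin.succ 1 from rfl,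
    show (3 : Fin 4) = Fin.succ 2 from rfl,
    show (1 : Fin 3) = Fin.succ 0 from rfl, show (2 : Fin 3) = Fin.succ 1 from rfl,
    show (1 : Fin 2) = Fin.succ 0 from rfl,
    Equiv.Perm.decomposeFin_symm_apply_zero, Equiv.Perm.decomposeFin_symm_apply_succ,
    Equiv.Perm.one_apply]
  simp (config := { decide := true }) only [Equiv.swap_apply_def]
  simp (config := { decide := true, maxSteps := 10000000 }) only
    [snoc_eq, Matrix.cons_val_zero, Matrix.cons_val_succ, E, mul_ite, ite_mul,
    mul_zero, zero_mul, mul_one, one_mul, Finset.sum_ite_eq, Finset.sum_ite_eq',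
    Finset.mem_univ, if_true, if_false, Finset.sum_const_zero, add_zero,
    zero_add]
  ring

def Bab {K : Type*} [Field K] {n : ℕ} (a b : Fin n) :
    LinearMap.BilinForm K (Fin n → K) :=
  LinearMap.mk₂ K (fun x y => x a * y b)
    (fun x x' y => by simp [add_mul])
    (fun c x y => by simp [smul_eq_mul, mul_assoc])
    (fun x y y' => by simp [mul_add])
    (fun c x y => by simp [smul_eq_mul]; ring)

/-- The element `∑_{i,j} λᵢ³ λⱼ² ⊗ λᵢ` of `S⁵ V* ⊗ V*`, viewed as a linear map
`S⁴ V → V* ⊗ V*`, is surjective.  Since `S⁴ V` is spanned by products `v₀·v₁·v₂·v₃`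
and `V* ⊗ V*` is (for finite-dimensional `V`) the space of all bilinear forms, this
says precisely that every bilinear form on `V` lies in the span of the contractions. -/
theorem stmt_1 {K : Type*} [Field K] [CharZero K] (n : ℕ) (hn : 2 ≤ n)
    (q : LinearMap.BilinForm K (Fin n → K)) :
    q ∈ Submodule.span K
      {f : LinearMap.BilinForm K (Fin n → K) |
        ∃ v : Fin 4 → (Fin n → K), ∀ x y, f x y = contract5 n v x y} := by
  set S : Set (LinearMap.BilinForm K (Fin n → K)) :=
    {f | ∃ v : Fin 4 → (Fin n → K), ∀ x y, f x y = contract5 n v x y} with hS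
  have hBab : ∀ p r : Fin n, Bab p r ∈ Submodule.span K S := by
    intro p r
    rcases eq_or_ne p r with rfl | hpr
    · have hmem : (120 : K) • Bab p p ∈ S := by
        refine ⟨![E p, E p, E p, E p], fun x y => ?_⟩
        rw [contract_eval_diag]
        simp [Bab, LinearMap.smul_apply, smul_eq_mul, LinearMap.mk₂_apply]
      have : Bab p p = (120 : K)⁻¹ • (((120 : K) • Bab p p : LinearMap.BilinForm K (Fin n → K))) := by
        rw [smul_smul, inv_mul_cancel₀ (by norm_num), one_smul]
      rw [this]
      exact Submodule.smul_mem _ _ (Submodule.subset_span hmem)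
    · have hmem : (12 : K) • Bab p r ∈ S := by
        refine ⟨![E r, E r, E r, E p], fun x y => ?_⟩
        rw [contract_eval r p (Ne.symm hpr)]
        simp [Bab, LinearMap.smul_apply, smul_eq_mul, LinearMap.mk₂_apply]
      have : Bab p r = (12 : K)⁻¹ • (((12 : K) • Bab p r : LinearMap.BilinForm K (Fin n → K))) := by
        rw [smul_smul, inv_mul_cancel₀ (by norm_num), one_smul]
      rw [this]
      exact Submodule.smul_mem _ _ (Submodule.subset_span hmem)
  have hdecomp : q = ∑ p : Fin n, ∑ r : Fin n, q (E p) (E r) • Bab p r := by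
    apply LinearMap.ext; intro x; apply LinearMap.ext; intro y
    have hx : x = ∑ p : Fin n, x p • (E p : Fin n → K) := by
      funext i
      simp [E, Finset.sum_apply, mul_ite, Finset.sum_ite_eq, smul_eq_mul]
    have hy : y = ∑ r : Fin n, y r • (E r : Fin n → K) := by
      funext i
      simp [E, Finset.sum_apply, mul_ite, Finset.sum_ite_eq, smul_eq_mul]
    conv_lhs => rw [hx, hy]
    simp only [map_sum, map_smul, LinearMap.sum_apply, LinearMap.smul_apply, smul_eq_mul]
    simp only [Finset.sum_apply, LinearMap.smul_apply, Bab,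
      LinearMap.mk₂_apply, smul_eq_mul]
    simp only [Finset.mul_sum]
    rw [Finset.sum_comm]
    exact Finset.sum_congr rfl fun p _ => Finset.sum_congr rfl fun r _ => by ring
  rw [hdecomp]
  exact Submodule.sum_mem _ fun p _ => Submodule.sum_mem _ fun r _ =>
    Submodule.smul_mem _ _ (hBab p r)
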